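/- arXiv:0705.0931 — 4 statements merged into one kernel-verified Lean document; each statement's English description precedes it below -/
import Mathlib

section
/- The difference between the Sarovar–Milburn bound and the SLD quantum information equals C_Υ(θ) − H(θ) = 8 · Σ_{j,k : p_j>0, p_k>0} [p_j p_k / (p_j + p_k)] · |⟨w_j'|w_k⟩|², where H(θ) = Σ_{k : p_k>0} (p_k')²/p_k + Σ_{j<k : p_j+p_k>0} 4 (p_j − p_k)²/(p_j + p_k) |⟨w_j'|w_k⟩|² and C_Υ(θ) = Σ_{k : p_k>0} (p_k')²/p_k + Σ_{j<k : p_j+p_k>0} 4 (p_j + p_k) |⟨w_j'|w_k⟩|² + 4 Σ_{k : p_k>0} p_k |⟨w_k'|w_k⟩|². -/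
open scoped InnerProductSpace

/-- Trichotomy splitting of a double sum. -/
lemma tri_sum {n : ℕ} (F : Fin n → Fin n → ℝ) :
    ∑ j, ∑ k, F j k =
      ∑ j, ∑ k, (if j < k then F j k + F k j else if j = k then F j k else 0) := by
  have h1 : ∑ j, ∑ k, (if (j : Fin n) < k then F k j else 0)
      = ∑ j, ∑ k, (if k < j then F j k else 0) := by
    rw [Finset.sum_comm]
  calc ∑ j, ∑ k, F j k
      = ∑ j, ∑ k, ((if j < k then F j k else 0) + ((if j = k then F j k else 0)
          + (if k < j then F j k else 0))) := by
        refine Finset.sum_congr rfl fun j _ => Finset.sum_congr rfl fun k _ => ?_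
        rcases lt_trichotomy j k with h | h | h
        · simp [h, h.ne, h.not_gt]
        · simp [h, lt_irrefl]
        · simp [h, h.ne', h.not_gt]
    _ = ∑ j, ∑ k, (if j < k then F j k else 0)
          + (∑ j, ∑ k, (if j = k then F j k else 0)
          + ∑ j, ∑ k, (if k < j then F j k else 0)) := by
        simp [Finset.sum_add_distrib]
    _ = ∑ j, ∑ k, (if j < k then F j k + F k j else if j = k then F j k else 0) := by
        rw [← h1, ← Finset.sum_add_distrib]
        simp only [← Finset.sum_add_distrib]
        refine Finset.sum_congr rfl fun j _ => Finset.sum_congr rfl fun k _ => ?_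
        rcases lt_trichotomy j k with h | h | h
        · simp [h, h.ne, h.not_gt]
        · simp [h, lt_irrefl]
        · simp [h, h.ne', h.not_gt]

/-- `C_Υ(θ) − H(θ) = 8 Σ_{j,k : p_j>0, p_k>0} p_j p_k/(p_j+p_k) |⟨w_j'|w_k⟩|²`. -/
theorem stmt3 {d n : ℕ} (p : Fin n → ℝ → ℝ) (w : Fin n → ℝ → EuclideanSpace ℂ (Fin d))
    (hpdiff : ∀ j, Differentiable ℝ (p j))
    (hwdiff : ∀ j, Differentiable ℝ (w j))
    (hpnonneg : ∀ j θ, 0 ≤ p j θ)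
    (hpsum : ∀ θ : ℝ, ∑ j, p j θ = 1)
    (horth : ∀ θ : ℝ, ∀ j k : Fin n,
      ⟪w j θ, w k θ⟫_ℂ = if j = k then 1 else 0) :
    ∀ θ : ℝ,
      (((∑ k, if 0 < p k θ then (deriv (p k) θ) ^ 2 / p k θ else 0)
          + ∑ j, ∑ k, if j < k ∧ 0 < p j θ + p k θ then
              4 * (p j θ + p k θ) * ‖⟪deriv (w j) θ, w k θ⟫_ℂ‖ ^ 2 else 0)
          + 4 * ∑ k, if 0 < p k θ then
              p k θ * ‖⟪deriv (w k) θ, w k θ⟫_ℂ‖ ^ 2 else 0)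
        - ((∑ k, if 0 < p k θ then (deriv (p k) θ) ^ 2 / p k θ else 0)
          + ∑ j, ∑ k, if j < k ∧ 0 < p j θ + p k θ then
              4 * (p j θ - p k θ) ^ 2 / (p j θ + p k θ)
                * ‖⟪deriv (w j) θ, w k θ⟫_ℂ‖ ^ 2 else 0)
      = 8 * ∑ j, ∑ k, if 0 < p j θ ∧ 0 < p k θ then
          p j θ * p k θ / (p j θ + p k θ)
            * ‖⟪deriv (w j) θ, w k θ⟫_ℂ‖ ^ 2 else 0 := by
  intro θ
  -- symmetry of the overlap magnitudes
  have hsym : ∀ j k : Fin n,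
      ‖⟪deriv (w j) θ, w k θ⟫_ℂ‖ = ‖⟪deriv (w k) θ, w j θ⟫_ℂ‖ := by
    intro j k
    have hd : HasDerivAt (fun t => ⟪w j t, w k t⟫_ℂ)
        (⟪w j θ, deriv (w k) θ⟫_ℂ + ⟪deriv (w j) θ, w k θ⟫_ℂ) θ :=
      HasDerivAt.inner ℂ ((hwdiff j θ).hasDerivAt) ((hwdiff k θ).hasDerivAt)
    have hconst : (fun t => ⟪w j t, w k t⟫_ℂ) = fun _ => (if j = k then 1 else 0 : ℂ) :=
      funext fun t => horth t j k
    rw [hconst] at hd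
    have h0 : ⟪w j θ, deriv (w k) θ⟫_ℂ + ⟪deriv (w j) θ, w k θ⟫_ℂ = 0 :=
      hd.unique (hasDerivAt_const θ _)
    have heq : ⟪deriv (w j) θ, w k θ⟫_ℂ = -⟪w j θ, deriv (w k) θ⟫_ℂ := by
      linear_combination h0
    rw [heq, norm_neg, ← inner_conj_symm, Complex.norm_conj]
  -- abbreviations
  set a : Fin n → ℝ := fun j => p j θ with ha
  set m : Fin n → Fin n → ℝ :=
    fun j k => ‖⟪deriv (w j) θ, w k θ⟫_ℂ‖ ^ 2 with hm
  have hmsym : ∀ j k, m j k = m k j := by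
    intro j k
    simp only [hm]
    rw [hsym j k]
  have hnn : ∀ j, 0 ≤ a j := fun j => hpnonneg j θ
  -- the diagonal single sum as a double sum
  have hdiag : (∑ k, if 0 < a k then a k * m k k else 0)
      = ∑ j, ∑ k, (if j = k then (if 0 < a k then a k * m k k else 0) else 0) := by
    refine (Finset.sum_congr rfl fun j _ => ?_).symm
    simp
  -- rewrite the RHS sum using the trichotomy lemma
  have hrhs := tri_sum (fun j k : Fin n =>
    if 0 < a j ∧ 0 < a k then a j * a k / (a j + a k) * m j k else 0)
  -- main pointwise identity
  have key : ∀ j k : Fin n,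
      (if j < k ∧ 0 < a j + a k then 4 * (a j + a k) * m j k else 0)
        - (if j < k ∧ 0 < a j + a k then 4 * (a j - a k) ^ 2 / (a j + a k) * m j k else 0)
        + 4 * (if j = k then (if 0 < a k then a k * m k k else 0) else 0)
      = 8 * (if j < k then
              (if 0 < a j ∧ 0 < a k then a j * a k / (a j + a k) * m j k else 0)
                + (if 0 < a k ∧ 0 < a j then a k * a j / (a k + a j) * m k j else 0)
            else if j = k then
              (if 0 < a j ∧ 0 < a k then a j * a k / (a j + a k) * m j k else 0)
            else 0) := by
    intro j k
    rcases lt_trichotomy j k with h | h | h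
    · simp only [h, h.ne, true_and, if_true, if_false, mul_zero, add_zero]
      rw [hmsym k j]
      by_cases hs : 0 < a j + a k
      · rw [if_pos hs, if_pos hs]
        have hsne : a j + a k ≠ 0 := ne_of_gt hs
        by_cases hj : 0 < a j
        · by_cases hk : 0 < a k
          · rw [if_pos ⟨hj, hk⟩, if_pos ⟨hk, hj⟩]
            field_simp
            ring
          · have hk0 : a k = 0 := le_antisymm (not_lt.mp hk) (hnn k)
            rw [if_neg (by tauto), if_neg (by tauto), hk0]
            have hjne : a j ≠ 0 := by rw [hk0, add_zero] at hsne; exact hsne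
            field_simp
            ring
        · have hj0 : a j = 0 := le_antisymm (not_lt.mp hj) (hnn j)
          rw [if_neg (by tauto), if_neg (by tauto), hj0]
          have hkne : a k ≠ 0 := by rw [hj0, zero_add] at hsne; exact hsne
          field_simp
          ring
      · rw [if_neg hs, if_neg hs]
        have hcond : ¬ (0 < a j ∧ 0 < a k) := by
          rintro ⟨h1, h2⟩; exact hs (by linarith)
        rw [if_neg hcond, if_neg (by tauto)]
        ring
    · subst h
      simp only [lt_self_iff_false, false_and, if_false, and_self, sub_zero,
        eq_self_iff_true, if_true]
      by_cases hj : 0 < a j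
      · rw [if_pos hj, if_pos hj]
        have : a j ≠ 0 := ne_of_gt hj
        field_simp
        ring
      · rw [if_neg hj, if_neg hj]
        ring
    · simp only [h.asymm, h.ne', false_and, if_false, mul_zero, mul_ite]
      norm_num
  -- assemble
  rw [hdiag, hrhs]
  rw [show ∀ A B C D : ℝ, (A + B + C) - (A + D) = (B - D) + C by intros; ring]
  rw [Finset.mul_sum, Finset.mul_sum]
  simp only [Finset.mul_sum, ← Finset.sum_sub_distrib, ← Finset.sum_add_distrib]
  exact Finset.sum_congr rfl fun j _ => Finset.sum_congr rfl fun k _ => key j k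
end

section
/- H(θ) ≤ C_Υ(θ): the SLD quantum information, expressed in eigendecomposition form, is bounded above by the Sarovar–Milburn bound. -/
open scoped InnerProductSpace

/-- `H(θ) ≤ C_Υ(θ)`: the SLD quantum information is bounded above by the
Sarovar–Milburn bound. -/
theorem stmt4 {d n : ℕ} (p : Fin n → ℝ → ℝ) (w : Fin n → ℝ → EuclideanSpace ℂ (Fin d))
    (hpdiff : ∀ j, Differentiable ℝ (p j))
    (hwdiff : ∀ j, Differentiable ℝ (w j))
    (hpnonneg : ∀ j θ, 0 ≤ p j θ)
    (hpsum : ∀ θ : ℝ, ∑ j, p j θ = 1)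
    (horth : ∀ θ : ℝ, ∀ j k : Fin n,
      ⟪w j θ, w k θ⟫_ℂ = if j = k then 1 else 0) :
    ∀ θ : ℝ,
      ((∑ k, if 0 < p k θ then (deriv (p k) θ) ^ 2 / p k θ else 0)
        + ∑ j, ∑ k, if j < k ∧ 0 < p j θ + p k θ then
            4 * (p j θ - p k θ) ^ 2 / (p j θ + p k θ)
              * ‖⟪deriv (w j) θ, w k θ⟫_ℂ‖ ^ 2 else 0)
      ≤ ((∑ k, if 0 < p k θ then (deriv (p k) θ) ^ 2 / p k θ else 0)
          + ∑ j, ∑ k, if j < k ∧ 0 < p j θ + p k θ then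
              4 * (p j θ + p k θ) * ‖⟪deriv (w j) θ, w k θ⟫_ℂ‖ ^ 2 else 0)
          + 4 * ∑ k, if 0 < p k θ then
              p k θ * ‖⟪deriv (w k) θ, w k θ⟫_ℂ‖ ^ 2 else 0 := by
  intro θ
  have h1 : (∑ j, ∑ k, if j < k ∧ 0 < p j θ + p k θ then
        4 * (p j θ - p k θ) ^ 2 / (p j θ + p k θ)
          * ‖⟪deriv (w j) θ, w k θ⟫_ℂ‖ ^ 2 else 0)
      ≤ ∑ j, ∑ k, if j < k ∧ 0 < p j θ + p k θ then
          4 * (p j θ + p k θ) * ‖⟪deriv (w j) θ, w k θ⟫_ℂ‖ ^ 2 else 0 := by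
    refine Finset.sum_le_sum fun j _ => Finset.sum_le_sum fun k _ => ?_
    split
    · next h =>
      have ha := hpnonneg j θ
      have hb := hpnonneg k θ
      have hpos := h.2
      have hc : (0:ℝ) ≤ ‖⟪deriv (w j) θ, w k θ⟫_ℂ‖ ^ 2 := sq_nonneg _
      have key : 4 * (p j θ - p k θ) ^ 2 / (p j θ + p k θ) ≤ 4 * (p j θ + p k θ) := by
        rw [div_le_iff₀ hpos]
        nlinarith [mul_nonneg ha hb]
      exact mul_le_mul_of_nonneg_right key hc
    · exact le_rfl
  have h2 : (0:ℝ) ≤ 4 * ∑ k, if 0 < p k θ then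
      p k θ * ‖⟪deriv (w k) θ, w k θ⟫_ℂ‖ ^ 2 else 0 := by
    refine mul_nonneg (by norm_num) (Finset.sum_nonneg fun k _ => ?_)
    split
    · next h => exact mul_nonneg (le_of_lt h) (sq_nonneg _)
    · exact le_rfl
  linarith
end

section
/- Equality H(θ) = C_Υ(θ) holds if and only if ⟨w_j'(θ)|w_k(θ)⟩ = 0 for all pairs j, k with p_j(θ) > 0 and p_k(θ) > 0. -/
open scoped InnerProductSpace

/-- `H(θ) = C_Υ(θ)` iff `⟨w_j'(θ)|w_k(θ)⟩ = 0` for all `j, k` with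
`p_j(θ) > 0` and `p_k(θ) > 0`. -/
theorem stmt5 {d n : ℕ} (p : Fin n → ℝ → ℝ) (w : Fin n → ℝ → EuclideanSpace ℂ (Fin d))
    (hpdiff : ∀ j, Differentiable ℝ (p j))
    (hwdiff : ∀ j, Differentiable ℝ (w j))
    (hpnonneg : ∀ j θ, 0 ≤ p j θ)
    (hpsum : ∀ θ : ℝ, ∑ j, p j θ = 1)
    (horth : ∀ θ : ℝ, ∀ j k : Fin n,
      ⟪w j θ, w k θ⟫_ℂ = if j = k then 1 else 0) :
    ∀ θ : ℝ,
      (((∑ k, if 0 < p k θ then (deriv (p k) θ) ^ 2 / p k θ else 0)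
          + ∑ j, ∑ k, if j < k ∧ 0 < p j θ + p k θ then
              4 * (p j θ - p k θ) ^ 2 / (p j θ + p k θ)
                * ‖⟪deriv (w j) θ, w k θ⟫_ℂ‖ ^ 2 else 0)
        = ((∑ k, if 0 < p k θ then (deriv (p k) θ) ^ 2 / p k θ else 0)
            + ∑ j, ∑ k, if j < k ∧ 0 < p j θ + p k θ then
                4 * (p j θ + p k θ) * ‖⟪deriv (w j) θ, w k θ⟫_ℂ‖ ^ 2 else 0)
            + 4 * ∑ k, if 0 < p k θ then
                p k θ * ‖⟪deriv (w k) θ, w k θ⟫_ℂ‖ ^ 2 else 0)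
      ↔ (∀ j k : Fin n, 0 < p j θ → 0 < p k θ →
          ⟪deriv (w j) θ, w k θ⟫_ℂ = 0) := by
  intro θ
  -- derivative of constant inner product
  have key : ∀ j k : Fin n,
      ⟪w j θ, deriv (w k) θ⟫_ℂ + ⟪deriv (w j) θ, w k θ⟫_ℂ = 0 := by
    intro j k
    have h1 : HasDerivAt (fun t => ⟪w j t, w k t⟫_ℂ)
        (⟪w j θ, deriv (w k) θ⟫_ℂ + ⟪deriv (w j) θ, w k θ⟫_ℂ) θ :=
      HasDerivAt.inner ℂ ((hwdiff j θ).hasDerivAt) ((hwdiff k θ).hasDerivAt)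
    have h2 : HasDerivAt (fun t => ⟪w j t, w k t⟫_ℂ) 0 θ := by
      have h3 : (fun t => ⟪w j t, w k t⟫_ℂ) = fun _ => (if j = k then 1 else 0 : ℂ) := by
        funext t; exact horth t j k
      rw [h3]; exact hasDerivAt_const θ _
    exact (h1.unique h2)
  have habs : ∀ j k : Fin n,
      ‖⟪deriv (w j) θ, w k θ⟫_ℂ‖ = ‖⟪deriv (w k) θ, w j θ⟫_ℂ‖ := by
    intro j k
    have h1 : ⟪deriv (w j) θ, w k θ⟫_ℂ = -⟪w j θ, deriv (w k) θ⟫_ℂ := by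
      have := key j k; linear_combination this
    have h2 : ⟪w j θ, deriv (w k) θ⟫_ℂ = (starRingEnd ℂ) ⟪deriv (w k) θ, w j θ⟫_ℂ :=
      (inner_conj_symm _ _).symm
    rw [h1, h2, norm_neg, Complex.norm_conj]
  constructor
  · intro heq
    -- reduce to X = Y + 4Z
    have hmain : (∑ j, ∑ k, if j < k ∧ 0 < p j θ + p k θ then
              4 * (p j θ - p k θ) ^ 2 / (p j θ + p k θ)
                * ‖⟪deriv (w j) θ, w k θ⟫_ℂ‖ ^ 2 else 0)
        = (∑ j, ∑ k, if j < k ∧ 0 < p j θ + p k θ then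
                4 * (p j θ + p k θ) * ‖⟪deriv (w j) θ, w k θ⟫_ℂ‖ ^ 2 else 0)
          + 4 * ∑ k, if 0 < p k θ then
                p k θ * ‖⟪deriv (w k) θ, w k θ⟫_ℂ‖ ^ 2 else 0 := by
      linarith [heq]
    have hle : ∀ j k : Fin n,
        (if j < k ∧ 0 < p j θ + p k θ then
              4 * (p j θ - p k θ) ^ 2 / (p j θ + p k θ)
                * ‖⟪deriv (w j) θ, w k θ⟫_ℂ‖ ^ 2 else 0)
        ≤ (if j < k ∧ 0 < p j θ + p k θ then
                4 * (p j θ + p k θ) * ‖⟪deriv (w j) θ, w k θ⟫_ℂ‖ ^ 2 else 0) := by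
      intro j k
      by_cases hc : j < k ∧ 0 < p j θ + p k θ
      · simp only [if_pos hc]
        have hA : (0:ℝ) ≤ ‖⟪deriv (w j) θ, w k θ⟫_ℂ‖ ^ 2 := sq_nonneg _
        have hcoef : 4 * (p j θ - p k θ) ^ 2 / (p j θ + p k θ) ≤ 4 * (p j θ + p k θ) := by
          rw [div_le_iff₀ hc.2]
          nlinarith [hpnonneg j θ, hpnonneg k θ]
        exact mul_le_mul_of_nonneg_right hcoef hA
      · simp [hc]
    have hZnn : ∀ k : Fin n, (0:ℝ) ≤ (if 0 < p k θ then
                p k θ * ‖⟪deriv (w k) θ, w k θ⟫_ℂ‖ ^ 2 else 0) := by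
      intro k
      by_cases hc : 0 < p k θ
      · simp only [if_pos hc]; positivity
      · simp [hc]
    have hXleY : (∑ j, ∑ k, if j < k ∧ 0 < p j θ + p k θ then
              4 * (p j θ - p k θ) ^ 2 / (p j θ + p k θ)
                * ‖⟪deriv (w j) θ, w k θ⟫_ℂ‖ ^ 2 else 0)
        ≤ (∑ j, ∑ k, if j < k ∧ 0 < p j θ + p k θ then
                4 * (p j θ + p k θ) * ‖⟪deriv (w j) θ, w k θ⟫_ℂ‖ ^ 2 else 0) :=
      Finset.sum_le_sum fun j _ => Finset.sum_le_sum fun k _ => hle j k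
    have hZnn' : (0:ℝ) ≤ ∑ k, if 0 < p k θ then
                p k θ * ‖⟪deriv (w k) θ, w k θ⟫_ℂ‖ ^ 2 else 0 :=
      Finset.sum_nonneg fun k _ => hZnn k
    have hZ0 : (∑ k, if 0 < p k θ then
                p k θ * ‖⟪deriv (w k) θ, w k θ⟫_ℂ‖ ^ 2 else 0) = 0 := by
      linarith
    have hXY : (∑ j, ∑ k, if j < k ∧ 0 < p j θ + p k θ then
              4 * (p j θ - p k θ) ^ 2 / (p j θ + p k θ)
                * ‖⟪deriv (w j) θ, w k θ⟫_ℂ‖ ^ 2 else 0)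
        = (∑ j, ∑ k, if j < k ∧ 0 < p j θ + p k θ then
                4 * (p j θ + p k θ) * ‖⟪deriv (w j) θ, w k θ⟫_ℂ‖ ^ 2 else 0) := by
      linarith
    -- termwise equality
    have houter := (Finset.sum_eq_sum_iff_of_le
      (fun j _ => Finset.sum_le_sum fun k (_ : k ∈ Finset.univ) => hle j k)).mp hXY
    have hterm : ∀ j k : Fin n,
        (if j < k ∧ 0 < p j θ + p k θ then
              4 * (p j θ - p k θ) ^ 2 / (p j θ + p k θ)
                * ‖⟪deriv (w j) θ, w k θ⟫_ℂ‖ ^ 2 else 0)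
        = (if j < k ∧ 0 < p j θ + p k θ then
                4 * (p j θ + p k θ) * ‖⟪deriv (w j) θ, w k θ⟫_ℂ‖ ^ 2 else 0) := by
      intro j k
      have hj := houter j (Finset.mem_univ j)
      exact (Finset.sum_eq_sum_iff_of_le (fun k _ => hle j k)).mp hj k (Finset.mem_univ k)
    have hdiag : ∀ k : Fin n, (if 0 < p k θ then
          p k θ * ‖⟪deriv (w k) θ, w k θ⟫_ℂ‖ ^ 2 else 0) = 0 :=
      fun k => (Finset.sum_eq_zero_iff_of_nonneg (fun k _ => hZnn k)).mp hZ0 k (Finset.mem_univ k)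
    -- conclude for j < k
    have hlt : ∀ j k : Fin n, j < k → 0 < p j θ → 0 < p k θ →
        ⟪deriv (w j) θ, w k θ⟫_ℂ = 0 := by
      intro j k hjk hpj hpk
      have hc : j < k ∧ 0 < p j θ + p k θ := ⟨hjk, by linarith⟩
      have h := hterm j k
      rw [if_pos hc, if_pos hc] at h
      by_contra h0
      have hA : (0:ℝ) < ‖⟪deriv (w j) θ, w k θ⟫_ℂ‖ ^ 2 := by
        have := norm_pos_iff.mpr h0
        positivity
      have h2 : 4 * (p j θ - p k θ) ^ 2 / (p j θ + p k θ) = 4 * (p j θ + p k θ) :=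
        mul_right_cancel₀ (ne_of_gt hA) h
      rw [div_eq_iff (ne_of_gt hc.2)] at h2
      nlinarith
    intro j k hpj hpk
    rcases lt_trichotomy j k with h | h | h
    · exact hlt j k h hpj hpk
    · subst h
      have h := hdiag j
      rw [if_pos hpj] at h
      have : ‖⟪deriv (w j) θ, w j θ⟫_ℂ‖ ^ 2 = 0 := by
        rcases mul_eq_zero.mp h with h' | h'
        · exact absurd h' (ne_of_gt hpj)
        · exact h'
      have : ‖⟪deriv (w j) θ, w j θ⟫_ℂ‖ = 0 := by
        exact pow_eq_zero_iff (by norm_num) |>.mp this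
      exact norm_eq_zero.mp this
    · have h0 := hlt k j h hpk hpj
      have : ‖⟪deriv (w j) θ, w k θ⟫_ℂ‖ = 0 := by
        rw [habs j k, h0, norm_zero]
      exact norm_eq_zero.mp this
  · intro h
    have hZ0 : (∑ k, if 0 < p k θ then
          p k θ * ‖⟪deriv (w k) θ, w k θ⟫_ℂ‖ ^ 2 else 0) = 0 := by
      apply Finset.sum_eq_zero
      intro k _
      by_cases hc : 0 < p k θ
      · rw [if_pos hc, h k k hc hc, norm_zero]; ring
      · rw [if_neg hc]
    have hXY : (∑ j, ∑ k, if j < k ∧ 0 < p j θ + p k θ then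
              4 * (p j θ - p k θ) ^ 2 / (p j θ + p k θ)
                * ‖⟪deriv (w j) θ, w k θ⟫_ℂ‖ ^ 2 else 0)
        = (∑ j, ∑ k, if j < k ∧ 0 < p j θ + p k θ then
                4 * (p j θ + p k θ) * ‖⟪deriv (w j) θ, w k θ⟫_ℂ‖ ^ 2 else 0) := by
      apply Finset.sum_congr rfl
      intro j _
      apply Finset.sum_congr rfl
      intro k _
      by_cases hc : j < k ∧ 0 < p j θ + p k θ
      · rw [if_pos hc, if_pos hc]
        by_cases hpj : 0 < p j θ
        · by_cases hpk : 0 < p k θ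
          · rw [h j k hpj hpk, norm_zero]; ring
          · have hk0 : p k θ = 0 := le_antisymm (not_lt.mp hpk) (hpnonneg k θ)
            rw [hk0]; field_simp; ring
        · have hj0 : p j θ = 0 := le_antisymm (not_lt.mp hpj) (hpnonneg j θ)
          rw [hj0]
          have hkpos : 0 < p k θ := by
            have := hc.2; rw [hj0] at this; linarith
          rw [show 4 * (0 - p k θ) ^ 2 = 4 * (0 + p k θ)^2 by ring]
          rw [mul_div_assoc]
          congr 1
          field_simp
      · rw [if_neg hc, if_neg hc]
    rw [hXY, hZ0]
    ring
end

section
/- With Λ the particular SLD solution above, tr{ρΛ²} equals Σ_{k:p_k>0} (p_k')²/p_k + Σ_{j<k:p_j+p_k>0} 4(p_j−p_k)²/(p_j+p_k) |⟨w_j'|w_k⟩|², i.e., the SLD quantum information has the stated eigendecomposition form. -/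
open Matrix

private lemma stmt10_mul_star (z : ℂ) : z * star z = ((‖z‖)^2 : ℝ) := by
  rw [← Complex.normSq_eq_norm_sq]
  rw [show (star z) = (starRingEnd ℂ) z from rfl, Complex.mul_conj]

private lemma stmt10_dot_star {d : ℕ} (u v : Fin d → ℂ) :
    star v ⬝ᵥ u = star (star u ⬝ᵥ v) := by
  simp [dotProduct, star_sum, mul_comm]

private lemma stmt10_vmv {d : ℕ} (u v x y : Fin d → ℂ) :
    vecMulVec u v * vecMulVec x y = (v ⬝ᵥ x) • vecMulVec u y := by
  ext i j
  simp [Matrix.mul_apply, vecMulVec_apply, dotProduct, Finset.sum_mul, Finset.mul_sum]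
  apply Finset.sum_congr rfl; intros; ring

private lemma stmt10_sum_split {M' : Type*} [AddCommMonoid M'] {d : ℕ} (f : Fin d → Fin d → M') :
    ∑ a, ∑ b, f a b = (∑ a, f a a) + ∑ a, ∑ b, (if a < b then f a b + f b a else 0) := by
  have h1 : ∀ a b : Fin d, f a b =
      (if a = b then f a b else 0) + ((if a < b then f a b else 0) + (if b < a then f a b else 0)) := by
    intro a b
    rcases lt_trichotomy a b with h|h|h
    · simp [h, h.ne, asymm h]
    · simp [h]
    · simp [h, h.ne', asymm h]
  calc ∑ a, ∑ b, f a b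
      = ∑ a, ∑ b, ((if a = b then f a b else 0) + ((if a < b then f a b else 0) + (if b < a then f a b else 0))) := by
        refine Finset.sum_congr rfl fun a _ => Finset.sum_congr rfl fun b _ => h1 a b
    _ = (∑ a, ∑ b, if a = b then f a b else 0) + ((∑ a, ∑ b, if a < b then f a b else 0) + (∑ a, ∑ b, if b < a then f a b else 0)) := by
        simp [Finset.sum_add_distrib]
    _ = (∑ a, f a a) + ∑ a, ∑ b, (if a < b then f a b + f b a else 0) := by
        congr 1
        · refine Finset.sum_congr rfl fun a _ => ?_
          simp
        · rw [Finset.sum_comm (f := fun a b => if b < a then f a b else 0)]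
          rw [← Finset.sum_add_distrib]
          refine Finset.sum_congr rfl fun a _ => ?_
          rw [← Finset.sum_add_distrib]
          refine Finset.sum_congr rfl fun b _ => ?_
          split <;> simp

/-- With `Λ` the particular SLD solution, `tr{ρΛ²}` equals
`Σ_{k:p_k>0} (p_k')²/p_k + Σ_{j<k:p_j+p_k>0} 4(p_j−p_k)²/(p_j+p_k) |⟨w_j'|w_k⟩|²`. -/
theorem stmt10 {d : ℕ} (p : Fin d → ℝ → ℝ) (w : Fin d → ℝ → Fin d → ℂ)
    (hpdiff : ∀ j, Differentiable ℝ (p j))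
    (hwdiff : ∀ j, Differentiable ℝ (w j))
    (hpnonneg : ∀ j θ, 0 ≤ p j θ)
    (hpsum : ∀ θ : ℝ, ∑ j, p j θ = 1)
    (horth : ∀ θ : ℝ, ∀ j k : Fin d,
      star (w j θ) ⬝ᵥ w k θ = if j = k then 1 else 0)
    (θ : ℝ)
    (Λ : Matrix (Fin d) (Fin d) ℂ)
    (hΛ : Λ = (∑ k, if p k θ ≠ 0 then
            ((deriv (p k) θ / p k θ : ℝ) : ℂ) • vecMulVec (w k θ) (star (w k θ)) else 0)
        + ∑ j, ∑ k, if j < k ∧ 0 < p j θ + p k θ then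
            ((2 * (p j θ - p k θ) / (p j θ + p k θ) : ℝ) : ℂ) •
              ((star (deriv (w j) θ) ⬝ᵥ w k θ) • vecMulVec (w j θ) (star (w k θ))
                + (star (w k θ) ⬝ᵥ deriv (w j) θ) • vecMulVec (w k θ) (star (w j θ)))
          else 0) :
    ((∑ j, ((p j θ : ℂ) • vecMulVec (w j θ) (star (w j θ)))) * Λ * Λ).trace
      = (((∑ k, if 0 < p k θ then (deriv (p k) θ) ^ 2 / p k θ else 0)
          + ∑ j, ∑ k, if j < k ∧ 0 < p j θ + p k θ then
              4 * (p j θ - p k θ) ^ 2 / (p j θ + p k θ)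
                * ‖star (deriv (w j) θ) ⬝ᵥ w k θ‖ ^ 2 else 0 : ℝ) : ℂ) := by
  classical
  set U : Matrix (Fin d) (Fin d) ℂ := Matrix.of (fun i a => w a θ i) with hUdef
  set M : Matrix (Fin d) (Fin d) ℂ := Matrix.of (fun a b =>
    if a = b then (if p a θ ≠ 0 then ((deriv (p a) θ / p a θ : ℝ) : ℂ) else 0)
    else if a < b ∧ 0 < p a θ + p b θ then
      ((2 * (p a θ - p b θ) / (p a θ + p b θ) : ℝ) : ℂ) * (star (deriv (w a) θ) ⬝ᵥ w b θ)
    else if b < a ∧ 0 < p b θ + p a θ then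
      ((2 * (p b θ - p a θ) / (p b θ + p a θ) : ℝ) : ℂ) * (star (w a θ) ⬝ᵥ deriv (w b) θ)
    else 0) with hMdef
  have hUU : Uᴴ * U = 1 := by
    ext a b
    simpa [hUdef, Matrix.mul_apply, Matrix.conjTranspose_apply, Matrix.one_apply,
      dotProduct] using horth θ a b
  have key : ∀ A : Matrix (Fin d) (Fin d) ℂ,
      U * A * Uᴴ = ∑ a, ∑ b, A a b • vecMulVec (w a θ) (star (w b θ)) := by
    intro A
    ext i j
    simp only [Matrix.mul_apply, hUdef, Matrix.of_apply, Matrix.conjTranspose_apply,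
      Matrix.sum_apply, Matrix.smul_apply, vecMulVec_apply, Finset.sum_mul]
    rw [Finset.sum_comm]
    refine Finset.sum_congr rfl fun a _ => Finset.sum_congr rfl fun b _ => ?_
    simp [Pi.star_apply]
    ring
  have hρ : (∑ j, ((p j θ : ℂ) • vecMulVec (w j θ) (star (w j θ))))
      = U * Matrix.diagonal (fun a => (p a θ : ℂ)) * Uᴴ := by
    rw [key]
    refine Finset.sum_congr rfl fun a _ => ?_
    rw [Finset.sum_eq_single a]
    · simp
    · intro b _ hb
      simp [Matrix.diagonal_apply_ne' _ hb]
    · simp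
  have hMdiag : ∀ a, M a a = if p a θ ≠ 0 then ((deriv (p a) θ / p a θ : ℝ) : ℂ) else 0 := by
    intro a; simp [hMdef]
  have hMup : ∀ a b, a < b → 0 < p a θ + p b θ →
      M a b = ((2 * (p a θ - p b θ) / (p a θ + p b θ) : ℝ) : ℂ) * (star (deriv (w a) θ) ⬝ᵥ w b θ) := by
    intro a b hab hc
    simp only [hMdef, Matrix.of_apply]
    rw [if_neg hab.ne, if_pos ⟨hab, hc⟩]
  have hMup0 : ∀ a b, a < b → ¬ (0 < p a θ + p b θ) → M a b = 0 := by
    intro a b hab hc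
    simp only [hMdef, Matrix.of_apply]
    rw [if_neg hab.ne, if_neg (fun h => hc h.2), if_neg (fun h => (asymm hab) h.1)]
  have hMlo : ∀ a b, a < b → 0 < p a θ + p b θ →
      M b a = ((2 * (p a θ - p b θ) / (p a θ + p b θ) : ℝ) : ℂ) * (star (w b θ) ⬝ᵥ deriv (w a) θ) := by
    intro a b hab hc
    simp only [hMdef, Matrix.of_apply]
    rw [if_neg hab.ne', if_neg (fun h => (asymm hab) h.1), if_pos ⟨hab, hc⟩]
  have hMlo0 : ∀ a b, a < b → ¬ (0 < p a θ + p b θ) → M b a = 0 := by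
    intro a b hab hc
    simp only [hMdef, Matrix.of_apply]
    rw [if_neg hab.ne', if_neg (fun h => (asymm hab) h.1), if_neg (fun h => hc h.2)]
  have hΛU : Λ = U * M * Uᴴ := by
    rw [hΛ, key M, stmt10_sum_split (M' := Matrix (Fin d) (Fin d) ℂ) (f := fun a b =>
      M a b • vecMulVec (w a θ) (star (w b θ)))]
    congr 1
    · refine Finset.sum_congr rfl fun a _ => ?_
      rw [hMdiag a, ite_smul, zero_smul]
    · refine Finset.sum_congr rfl fun a _ => Finset.sum_congr rfl fun b _ => ?_
      by_cases hab : a < b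
      · by_cases hc : 0 < p a θ + p b θ
        · rw [if_pos ⟨hab, hc⟩, if_pos hab, hMup a b hab hc, hMlo a b hab hc,
            smul_add, smul_smul, smul_smul]
        · rw [if_neg (fun h => hc h.2), if_pos hab, hMup0 a b hab hc, hMlo0 a b hab hc]
          simp
      · rw [if_neg (fun h => hab h.1), if_neg hab]
  rw [hρ, hΛU]
  have hcomb : ∀ A B : Matrix (Fin d) (Fin d) ℂ,
      (U * A * Uᴴ) * (U * B * Uᴴ) = U * (A * B) * Uᴴ := by
    intro A B
    have h1 : (U * A * Uᴴ) * (U * B * Uᴴ) = U * A * (Uᴴ * U) * B * Uᴴ := by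
      noncomm_ring
    rw [h1, hUU, Matrix.mul_one, Matrix.mul_assoc U A B]
  rw [hcomb, hcomb]
  have htrU : ∀ X : Matrix (Fin d) (Fin d) ℂ, (U * X * Uᴴ).trace = X.trace := by
    intro X
    rw [Matrix.trace_mul_cycle, hUU, Matrix.one_mul]
  rw [htrU]
  have htr : (Matrix.diagonal (fun a => (p a θ : ℂ)) * M * M).trace
      = ∑ a, ∑ b, (p a θ : ℂ) * (M a b * M b a) := by
    rw [Matrix.trace]
    refine Finset.sum_congr rfl fun a _ => ?_
    rw [Matrix.diag_apply, Matrix.mul_apply]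
    refine Finset.sum_congr rfl fun b _ => ?_
    rw [Matrix.diagonal_mul, mul_assoc]
  rw [htr, stmt10_sum_split (M' := ℂ) (f := fun a b => (p a θ : ℂ) * (M a b * M b a))]
  rw [Complex.ofReal_add]
  congr 1
  · rw [Complex.ofReal_sum]
    refine Finset.sum_congr rfl fun k _ => ?_
    by_cases h : p k θ = 0
    · have hnpos : ¬ (0 < p k θ) := by simp [h]
      simp [hMdiag, h, hnpos]
    · have hpos : 0 < p k θ := lt_of_le_of_ne (hpnonneg k θ) (Ne.symm h)
      rw [hMdiag k, if_pos h, if_pos hpos]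
      rw [show ((p k θ : ℂ) * (((deriv (p k) θ / p k θ : ℝ) : ℂ) * ((deriv (p k) θ / p k θ : ℝ) : ℂ)))
          = ((p k θ * (deriv (p k) θ / p k θ * (deriv (p k) θ / p k θ)) : ℝ) : ℂ) by push_cast; ring]
      congr 1
      field_simp
  · rw [Complex.ofReal_sum]
    refine Finset.sum_congr rfl fun a _ => ?_
    rw [Complex.ofReal_sum]
    refine Finset.sum_congr rfl fun b _ => ?_
    by_cases hab : a < b
    · by_cases hc : 0 < p a θ + p b θ
      · rw [if_pos hab, if_pos ⟨hab, hc⟩, hMup a b hab hc, hMlo a b hab hc, stmt10_dot_star (deriv (w a) θ) (w b θ)]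
        set α : ℂ := star (deriv (w a) θ) ⬝ᵥ w b θ with hα
        set g : ℝ := 2 * (p a θ - p b θ) / (p a θ + p b θ) with hg
        have h1 : (p a θ : ℂ) * ((g : ℂ) * α * ((g : ℂ) * star α))
            + (p b θ : ℂ) * ((g : ℂ) * star α * ((g : ℂ) * α))
            = (((p a θ + p b θ) * (g * g) : ℝ) : ℂ) * (α * star α) := by
          push_cast; ring
        rw [h1, stmt10_mul_star, ← Complex.ofReal_mul]
        congr 1
        rw [hg]
        have hne : p a θ + p b θ ≠ 0 := ne_of_gt hc
        field_simp
        ring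
      · rw [if_pos hab, if_neg (fun h => hc h.2), hMup0 a b hab hc, hMlo0 a b hab hc]
        simp
    · rw [if_neg hab, if_neg (fun h => hab h.1)]
      simp
end
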